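/- Let a > 0, s ∈ ℝ fixed, 𝒫(·,s) : (0,∞) → ℝ differentiable, and e(·,s) differentiable with ∂_τ e(T,s) = −𝒫(T,s) for all T > 0. Assume Whitham's condition a² > −∂_τ𝒫(T,s) for all T > 0. Fix u ∈ ℝ and τ > 0 and define ℰ(u,τ,T,s) = u²/2 + e(T,s) + ((𝒫(T,s) + a²(T−τ))² − 𝒫(T,s)²)/(2a²). Then T = τ is the unique global minimizer of T ↦ ℰ(u,τ,T,s) on (0,∞), i.e. ℰ(u,τ,T,s) > ℰ(u,τ,τ,s) for every T > 0 with T ≠ τ, and moreover ℰ(u,τ,τ,s) = u²/2 + e(τ,s) (the equilibrium relaxation energy equals the phasic total energy E(u,τ,s)). -/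

import Mathlib

/-- Gibbs principle: under Whitham's condition
`a² > −∂_τ𝒫(T,s)`, the relaxed specific volume `T = τ` is the unique global
minimizer on `(0,∞)` of the relaxation energy
`T ↦ ℰ(u,τ,T,s) = u²/2 + e(T,s) + ((𝒫(T,s) + a²(T−τ))² − 𝒫(T,s)²)/(2a²)`,
and at equilibrium the relaxation energy equals the phasic total energy
`E(u,τ,s) = u²/2 + e(τ,s)`. -/
theorem gibbs_principle
    (a : ℝ) (ha : 0 < a) (s : ℝ) (P e : ℝ → ℝ → ℝ) (dP : ℝ → ℝ)
    (hde : ∀ T : ℝ, 0 < T → HasDerivAt (fun τ' => e τ' s) (-(P T s)) T)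
    (hdP : ∀ T : ℝ, 0 < T → HasDerivAt (fun τ' => P τ' s) (dP T) T)
    (whitham : ∀ T : ℝ, 0 < T → a ^ 2 > -(dP T))
    (u τ : ℝ) (hτ : 0 < τ) :
    (∀ T : ℝ, 0 < T → T ≠ τ →
      u ^ 2 / 2 + e T s + ((P T s + a ^ 2 * (T - τ)) ^ 2 - (P T s) ^ 2) / (2 * a ^ 2)
        > u ^ 2 / 2 + e τ s
          + ((P τ s + a ^ 2 * (τ - τ)) ^ 2 - (P τ s) ^ 2) / (2 * a ^ 2))
    ∧ u ^ 2 / 2 + e τ s + ((P τ s + a ^ 2 * (τ - τ)) ^ 2 - (P τ s) ^ 2) / (2 * a ^ 2)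
        = u ^ 2 / 2 + e τ s := by
  have ha2 : (a : ℝ) ^ 2 ≠ 0 := pow_ne_zero 2 ha.ne'
  set g : ℝ → ℝ := fun x => e x s + ((P x s + a ^ 2 * (x - τ)) ^ 2 - (P x s) ^ 2) / (2 * a ^ 2) with hgdef
  have hg : ∀ T : ℝ, 0 < T → HasDerivAt g ((T - τ) * (dP T + a ^ 2)) T := by
    intro T hT
    have h1 := hde T hT
    have h2 := hdP T hT
    have h3 : HasDerivAt (fun x : ℝ => P x s + a ^ 2 * (x - τ)) (dP T + a ^ 2 * 1) T :=
      h2.add (((hasDerivAt_id T).sub_const τ).const_mul (a ^ 2))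
    have h4 := ((h3.pow 2).sub (h2.pow 2)).div_const (2 * a ^ 2)
    have h5 := h1.add h4
    refine HasDerivAt.congr_deriv h5 ?_
    field_simp
    ring
  constructor
  · intro T hT hne
    have key : g τ < g T := by
      rcases lt_or_gt_of_ne hne with hlt | hgt
      · -- T < τ : g strictly anti on [T, τ]
        have hanti : StrictAntiOn g (Set.Icc T τ) := by
          apply strictAntiOn_of_deriv_neg (convex_Icc T τ)
          · intro x hx
            exact (hg x (lt_of_lt_of_le hT hx.1)).continuousAt.continuousWithinAt
          · intro x hx
            rw [interior_Icc] at hx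
            have hx0 : 0 < x := hT.trans hx.1
            rw [(hg x hx0).deriv]
            have := whitham x hx0
            have hpos : 0 < dP x + a ^ 2 := by linarith
            have : x - τ < 0 := by linarith [hx.2]
            exact mul_neg_of_neg_of_pos this hpos
        exact hanti (Set.left_mem_Icc.2 hlt.le) (Set.right_mem_Icc.2 hlt.le) hlt
      · -- τ < T : g strictly mono on [τ, T]
        have hmono : StrictMonoOn g (Set.Icc τ T) := by
          apply strictMonoOn_of_deriv_pos (convex_Icc τ T)
          · intro x hx
            exact (hg x (lt_of_lt_of_le hτ hx.1)).continuousAt.continuousWithinAt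
          · intro x hx
            rw [interior_Icc] at hx
            have hx0 : 0 < x := hτ.trans hx.1
            rw [(hg x hx0).deriv]
            have := whitham x hx0
            have hpos : 0 < dP x + a ^ 2 := by linarith
            have : 0 < x - τ := by linarith [hx.1]
            exact mul_pos this hpos
        exact hmono (Set.left_mem_Icc.2 hgt.le) (Set.right_mem_Icc.2 hgt.le) hgt
    have := key
    simp only [hgdef] at this
    linarith
  · field_simp
    ring
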